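/- Let a be a non-invertible transformation of {1,...,n} of rank k and let (x y) be a transposition in S_n. Then a∘(x y) = a∘b, where either b is the identity or b is a product of at most three idempotent transformations each of rank k. -/

import Mathlib

set_option maxHeartbeats 1000000


/-- The full transformation monoid on `{1,...,n}`, modeled as `Function.End (Fin n)`
(multiplication is composition). -/
abbrev Tn (n : ℕ) := Function.End (Fin n)

/-- A permutation viewed as a transformation. -/
def ofPerm {n : ℕ} (g : Equiv.Perm (Fin n)) : Tn n := ⇑g

/-- The rank of a transformation: the size of its image. -/
def rnk {n : ℕ} (a : Tn n) : ℕ := (Finset.univ.image a).card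

/-- The symmetric group embedded in `Tn n` as a set. -/
def perms (n : ℕ) : Set (Tn n) := Set.range (fun g : Equiv.Perm (Fin n) => ofPerm g)

/-- The `S_n`-conjugacy class of a transformation. -/
def conjClass {n : ℕ} (t : Tn n) : Set (Tn n) :=
  {s | ∃ g : Equiv.Perm (Fin n), s = ofPerm g⁻¹ * t * ofPerm g}

/-- Idempotent fixing a set `S`, sending everything else to `d ∈ S`. -/
def idemOn {n : ℕ} (S : Finset (Fin n)) (d : Fin n) : Tn n :=
  fun w => if w ∈ S then w else d

lemma idemOn_mem {n : ℕ} (S : Finset (Fin n)) (d : Fin n) (hd : d ∈ S) (w : Fin n) :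
    idemOn S d w ∈ S := by
  unfold idemOn; split <;> simp_all

lemma idemOn_idem {n : ℕ} (S : Finset (Fin n)) (d : Fin n) (hd : d ∈ S) :
    idemOn S d * idemOn S d = idemOn S d := by
  funext w
  have h := idemOn_mem S d hd w
  show idemOn S d (idemOn S d w) = idemOn S d w
  unfold idemOn at *
  simp [h]

lemma idemOn_rnk {n : ℕ} (S : Finset (Fin n)) (d : Fin n) (hd : d ∈ S) :
    rnk (idemOn S d) = S.card := by
  unfold rnk
  congr 1
  ext s
  erw [Finset.mem_image]; simp only [Finset.mem_univ, true_and]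
  constructor
  · rintro ⟨w, rfl⟩; exact idemOn_mem S d hd w
  · intro hs; exact ⟨s, by simp [idemOn, hs]⟩

/-- `a∘(x y)` equals `a` followed by a product of at most three idempotents of rank `k`. -/
theorem stmt2 (n k : ℕ) (a : Tn n) (ha : ¬ Function.Bijective a) (hk : rnk a = k)
    (x y : Fin n) (hxy : x ≠ y) :
    ∃ L : List (Tn n), L.length ≤ 3 ∧ (∀ e ∈ L, e * e = e ∧ rnk e = k) ∧
      ofPerm (Equiv.swap x y) * a = L.foldl (fun f e => e * f) a := by
  set im : Finset (Fin n) := Finset.univ.image a with him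
  have hkcard : im.card = k := hk
  have hnsurj : ¬ Function.Surjective a := by
    intro h
    exact ha (Finite.surjective_iff_bijective.mp h)
  obtain ⟨z, hz⟩ : ∃ z, z ∉ im := by
    by_contra h
    push_neg at h
    apply hnsurj
    intro v
    obtain ⟨w, _, hw⟩ := Finset.mem_image.mp (h v)
    exact ⟨w, hw⟩
  have ham : ∀ w, a w ∈ im := fun w => Finset.mem_image_of_mem a (Finset.mem_univ w)
  by_cases hx : x ∈ im
  · by_cases hy : y ∈ im
    · -- both in image: three idempotents
      have hzx : z ≠ x := fun h => hz (h ▸ hx)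
      have hzy : z ≠ y := fun h => hz (h ▸ hy)
      set S1 : Finset (Fin n) := insert z (im.erase x) with hS1
      set S2 : Finset (Fin n) := insert x (insert z ((im.erase x).erase y)) with hS2
      have hdz : z ∈ S1 := Finset.mem_insert_self _ _
      have hdx : x ∈ S2 := Finset.mem_insert_self _ _
      set e1 := idemOn S1 z with he1
      set e2 := idemOn S2 x with he2
      set e3 := idemOn im y with he3
      have hye : y ∈ im.erase x := Finset.mem_erase.mpr ⟨hxy.symm, hy⟩
      have hc1 : S1.card = k := by
        rw [hS1, Finset.card_insert_of_notMem (by simp [hz]), Finset.card_erase_of_mem hx]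
        have : 0 < im.card := Finset.card_pos.mpr ⟨x, hx⟩
        omega
      have hc2 : S2.card = k := by
        rw [hS2, Finset.card_insert_of_notMem (by simp [hzx.symm, Finset.mem_erase]),
          Finset.card_insert_of_notMem (by simp [hz]),
          Finset.card_erase_of_mem hye, Finset.card_erase_of_mem hx]
        have h1 : 0 < (im.erase x).card := Finset.card_pos.mpr ⟨y, hye⟩
        rw [Finset.card_erase_of_mem hx] at h1
        omega
      refine ⟨[e1, e2, e3], by norm_num, ?_, ?_⟩
      · intro e he
        simp only [List.mem_cons, List.not_mem_nil, or_false] at he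
        rcases he with rfl | rfl | rfl
        · exact ⟨idemOn_idem _ _ hdz, by rw [he1, idemOn_rnk _ _ hdz, hc1]⟩
        · exact ⟨idemOn_idem _ _ hdx, by rw [he2, idemOn_rnk _ _ hdx, hc2]⟩
        · exact ⟨idemOn_idem _ _ hy, by rw [he3, idemOn_rnk _ _ hy, hkcard]⟩
      · funext w
        show Equiv.swap x y (a w) = e3 (e2 (e1 (a w)))
        have hv := ham w
        set v := a w with hvdef
        rcases eq_or_ne v x with rfl | hvx
        · have h1 : e1 v = z := by
            rw [he1]; unfold idemOn
            simp [hS1, hzx, Finset.mem_erase]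
          have h2 : e2 z = z := by
            rw [he2]; unfold idemOn
            simp [hS2]
          have h3 : e3 z = y := by
            rw [he3]; unfold idemOn; simp [hz]
          rw [h1, h2, h3, Equiv.swap_apply_left]
        · rcases eq_or_ne v y with rfl | hvy
          · have h1 : e1 v = v := by
              rw [he1]; unfold idemOn
              simp [hS1, hye]
            have h2 : e2 v = x := by
              rw [he2]; unfold idemOn
              simp [hS2, hxy, hzy.symm, Finset.mem_erase]
            have h3 : e3 x = x := by
              rw [he3]; unfold idemOn; simp [hx]
            rw [h1, h2, h3, Equiv.swap_apply_right]
          · have hvz : v ≠ z := fun h => hz (h ▸ hv)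
            have h1 : e1 v = v := by
              rw [he1]; unfold idemOn
              simp [hS1, Finset.mem_erase, hvx, hv]
            have h2 : e2 v = v := by
              rw [he2]; unfold idemOn
              simp [hS2, Finset.mem_erase, hvx, hvy, hv]
            have h3 : e3 v = v := by
              rw [he3]; unfold idemOn; simp [hv]
            rw [h1, h2, h3, Equiv.swap_apply_of_ne_of_ne hvx hvy]
    · -- x in image, y not: one idempotent
      set S : Finset (Fin n) := insert y (im.erase x) with hS
      have hdy : y ∈ S := Finset.mem_insert_self _ _
      set e := idemOn S y with he
      have hc : S.card = k := by
        rw [hS, Finset.card_insert_of_notMem (by simp [hy]), Finset.card_erase_of_mem hx]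
        have : 0 < im.card := Finset.card_pos.mpr ⟨x, hx⟩
        omega
      refine ⟨[e], by norm_num, ?_, ?_⟩
      · intro f hf
        simp only [List.mem_cons, List.not_mem_nil, or_false] at hf
        subst hf
        exact ⟨idemOn_idem _ _ hdy, by rw [he, idemOn_rnk _ _ hdy, hc]⟩
      · funext w
        show Equiv.swap x y (a w) = e (a w)
        have hv := ham w
        set v := a w with hvdef
        have hvy : v ≠ y := fun h => hy (h ▸ hv)
        rcases eq_or_ne v x with rfl | hvx
        · have h1 : e v = y := by
            rw [he]; unfold idemOn
            simp [hS, hxy, Finset.mem_erase, hvy]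
          rw [h1, Equiv.swap_apply_left]
        · have h1 : e v = v := by
            rw [he]; unfold idemOn
            simp [hS, Finset.mem_erase, hvx, hv]
          rw [h1, Equiv.swap_apply_of_ne_of_ne hvx hvy]
  · by_cases hy : y ∈ im
    · -- y in image, x not: one idempotent
      set S : Finset (Fin n) := insert x (im.erase y) with hS
      have hdx : x ∈ S := Finset.mem_insert_self _ _
      set e := idemOn S x with he
      have hc : S.card = k := by
        rw [hS, Finset.card_insert_of_notMem (by simp [hx]), Finset.card_erase_of_mem hy]
        have : 0 < im.card := Finset.card_pos.mpr ⟨y, hy⟩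
        omega
      refine ⟨[e], by norm_num, ?_, ?_⟩
      · intro f hf
        simp only [List.mem_cons, List.not_mem_nil, or_false] at hf
        subst hf
        exact ⟨idemOn_idem _ _ hdx, by rw [he, idemOn_rnk _ _ hdx, hc]⟩
      · funext w
        show Equiv.swap x y (a w) = e (a w)
        have hv := ham w
        set v := a w with hvdef
        have hvx : v ≠ x := fun h => hx (h ▸ hv)
        rcases eq_or_ne v y with rfl | hvy
        · have h1 : e v = x := by
            rw [he]; unfold idemOn
            simp [hS, hxy.symm, Finset.mem_erase, hvx]
          rw [h1, Equiv.swap_apply_right]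
        · have h1 : e v = v := by
            rw [he]; unfold idemOn
            simp [hS, Finset.mem_erase, hvy, hv]
          rw [h1, Equiv.swap_apply_of_ne_of_ne hvx hvy]
    · -- neither in image: empty list
      refine ⟨[], by norm_num, by simp, ?_⟩
      funext w
      show Equiv.swap x y (a w) = a w
      exact Equiv.swap_apply_of_ne_of_ne (fun h => hx (h ▸ ham w)) (fun h => hy (h ▸ ham w))
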